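/- The Bogoliubov–Valatin state ω^{BV}_h(A) = ⟨BV(h)| A |BV(h)⟩ agrees with the vacuum state ω_{1-h,1-h} = (1-h)ω_{1,1} + h ω_{0,0} on all sixteen basis elements of the CAR algebra over ℂ² except c₁c₂ and c₁*c₂*, where ω^{BV}_h(c₁c₂) = -√(h(1-h)) ≠ 0 for 0 < h < 1 while ω_{1-h,1-h}(c₁c₂) = 0. -/

import Mathlib

set_option maxHeartbeats 1600000 in
/-- The Bogoliubov–Valatin state `ω^{BV}_h(A) = ⟨BV|A|BV⟩`
agrees with the vacuum state `ω_{1-h,1-h} = (1-h) ω_{1,1} + h ω_{0,0}` (here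
realized by the vectors `Ω` and `Ω' = c₁* c₂* Ω`) on all sixteen basis
elements of the CAR algebra over `ℂ²` except `c₁c₂` and `c₁*c₂*`; moreover
`ω^{BV}_h(c₁c₂) = -√(h(1-h)) ≠ 0` for `0 < h < 1` while
`ω_{1-h,1-h}(c₁c₂) = 0`. -/
theorem bogoliubov_valatin_state_vs_vacuum_state
    (c₁ c₂ : EuclideanSpace ℂ (Fin 4) →L[ℂ] EuclideanSpace ℂ (Fin 4))
    (d₁ d₂ : EuclideanSpace ℂ (Fin 4) →L[ℂ] EuclideanSpace ℂ (Fin 4))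
    (hd₁ : d₁ = ContinuousLinearMap.adjoint c₁)
    (hd₂ : d₂ = ContinuousLinearMap.adjoint c₂)
    (acc11 : c₁ * c₁ + c₁ * c₁ = 0)
    (acc12 : c₁ * c₂ + c₂ * c₁ = 0)
    (acc22 : c₂ * c₂ + c₂ * c₂ = 0)
    (car11 : d₁ * c₁ + c₁ * d₁ = 1)
    (car12 : d₁ * c₂ + c₂ * d₁ = 0)
    (car21 : d₂ * c₁ + c₁ * d₂ = 0)
    (car22 : d₂ * c₂ + c₂ * d₂ = 1)
    (Ω : EuclideanSpace ℂ (Fin 4))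
    (hΩnorm : ‖Ω‖ = 1)
    (hΩ1 : c₁ Ω = 0) (hΩ2 : c₂ Ω = 0)
    (h : ℝ) (h0 : 0 ≤ h) (h1 : h ≤ 1) :
    let BV : EuclideanSpace ℂ (Fin 4) :=
      (Real.sqrt (1 - h) : ℂ) • Ω + (Real.sqrt h : ℂ) • d₁ (d₂ Ω)
    let Ω' : EuclideanSpace ℂ (Fin 4) := d₁ (d₂ Ω)
    let ωBV : (EuclideanSpace ℂ (Fin 4) →L[ℂ] EuclideanSpace ℂ (Fin 4)) → ℂ :=
      fun T => inner ℂ BV (T BV)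
    let ωmix : (EuclideanSpace ℂ (Fin 4) →L[ℂ] EuclideanSpace ℂ (Fin 4)) → ℂ :=
      fun T => (1 - (h : ℂ)) * inner ℂ Ω (T Ω) + (h : ℂ) * inner ℂ Ω' (T Ω')
    (∀ T ∈ [(1 : EuclideanSpace ℂ (Fin 4) →L[ℂ] EuclideanSpace ℂ (Fin 4)),
        ((1 : ℂ) / 2) • (c₁ * d₁ + c₂ * d₂),
        c₁ * c₂ * d₂ * d₁,
        c₁ * d₂,
        ((1 : ℂ) / 2) • (c₁ * d₁ - c₂ * d₂),
        c₂ * d₁,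
        c₁,
        c₁ * c₂ * d₂,
        c₂,
        c₂ * c₁ * d₁,
        d₂,
        c₁ * d₁ * d₂,
        d₁,
        c₂ * d₂ * d₁], ωBV T = ωmix T) ∧
    ωBV (c₁ * c₂) = -(Real.sqrt (h * (1 - h)) : ℂ) ∧
    (0 < h → h < 1 → ωBV (c₁ * c₂) ≠ 0) ∧
    ωmix (c₁ * c₂) = 0 := by

  -- operator-level consequences
  have hsq : ∀ c : EuclideanSpace ℂ (Fin 4) →L[ℂ] EuclideanSpace ℂ (Fin 4),
      c + c = 0 → c = 0 := by
    intro c hc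
    ext x i
    have := DFunLike.congr_fun hc x
    simp only [ContinuousLinearMap.add_apply, ContinuousLinearMap.zero_apply] at this
    have := congrArg (fun v : EuclideanSpace ℂ (Fin 4) => v i) this
    simp only [PiLp.add_apply, PiLp.zero_apply] at this
    simpa using add_self_eq_zero.mp this
  have hcc1 : c₁ * c₁ = 0 := hsq _ acc11
  have hcc2 : c₂ * c₂ = 0 := hsq _ acc22
  have hdd1 : d₁ * d₁ = 0 := by
    rw [hd₁, ← ContinuousLinearMap.star_eq_adjoint, ← star_mul, hcc1, ContinuousLinearMap.star_eq_adjoint, map_zero]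
  have hdd2 : d₂ * d₂ = 0 := by
    rw [hd₂, ← ContinuousLinearMap.star_eq_adjoint, ← star_mul, hcc2, ContinuousLinearMap.star_eq_adjoint, map_zero]
  have hanti : d₂ * d₁ + d₁ * d₂ = 0 := by
    have := congrArg star acc12
    rw [hd₁, hd₂, ← ContinuousLinearMap.star_eq_adjoint, ← ContinuousLinearMap.star_eq_adjoint,
      ← star_mul, ← star_mul, ContinuousLinearMap.star_eq_adjoint, ContinuousLinearMap.star_eq_adjoint,
      ← map_add, acc12, map_zero]
  -- adjoint / inner-product facts
  have ad1r : ∀ x y : EuclideanSpace ℂ (Fin 4), (inner ℂ x (d₁ y) : ℂ) = inner ℂ (c₁ x) y := by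
    intro x y; rw [hd₁, ContinuousLinearMap.adjoint_inner_right]
  have ad2r : ∀ x y : EuclideanSpace ℂ (Fin 4), (inner ℂ x (d₂ y) : ℂ) = inner ℂ (c₂ x) y := by
    intro x y; rw [hd₂, ContinuousLinearMap.adjoint_inner_right]
  have ad1l : ∀ x y : EuclideanSpace ℂ (Fin 4), (inner ℂ (d₁ x) y : ℂ) = inner ℂ x (c₁ y) := by
    intro x y; rw [hd₁, ContinuousLinearMap.adjoint_inner_left]
  have ad2l : ∀ x y : EuclideanSpace ℂ (Fin 4), (inner ℂ (d₂ x) y : ℂ) = inner ℂ x (c₂ y) := by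
    intro x y; rw [hd₂, ContinuousLinearMap.adjoint_inner_left]
  -- action of creators/annihilators on the four basis vectors
  have hc1e1 : c₁ (d₁ Ω) = Ω := by
    have := DFunLike.congr_fun car11 Ω
    simpa [ContinuousLinearMap.mul_apply, ContinuousLinearMap.add_apply,
      ContinuousLinearMap.one_apply, hΩ1] using this
  have hc2e1 : c₂ (d₁ Ω) = 0 := by
    have := DFunLike.congr_fun car12 Ω
    simpa [ContinuousLinearMap.mul_apply, ContinuousLinearMap.add_apply,
      ContinuousLinearMap.zero_apply, hΩ2] using this
  have hc1e2 : c₁ (d₂ Ω) = 0 := by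
    have := DFunLike.congr_fun car21 Ω
    simpa [ContinuousLinearMap.mul_apply, ContinuousLinearMap.add_apply,
      ContinuousLinearMap.zero_apply, hΩ1] using this
  have hc2e2 : c₂ (d₂ Ω) = Ω := by
    have := DFunLike.congr_fun car22 Ω
    simpa [ContinuousLinearMap.mul_apply, ContinuousLinearMap.add_apply,
      ContinuousLinearMap.one_apply, hΩ2] using this
  have hd1e1 : d₁ (d₁ Ω) = 0 := by
    have := DFunLike.congr_fun hdd1 Ω
    simpa [ContinuousLinearMap.mul_apply, ContinuousLinearMap.zero_apply] using this
  have hd2e2 : d₂ (d₂ Ω) = 0 := by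
    have := DFunLike.congr_fun hdd2 Ω
    simpa [ContinuousLinearMap.mul_apply, ContinuousLinearMap.zero_apply] using this
  have hd2e1 : d₂ (d₁ Ω) = -(d₁ (d₂ Ω)) := by
    have := DFunLike.congr_fun hanti Ω
    simp only [ContinuousLinearMap.mul_apply, ContinuousLinearMap.add_apply,
      ContinuousLinearMap.zero_apply] at this
    exact eq_neg_of_add_eq_zero_left this
  have hd1e3 : d₁ (d₁ (d₂ Ω)) = 0 := by
    have := DFunLike.congr_fun hdd1 (d₂ Ω)
    simpa [ContinuousLinearMap.mul_apply, ContinuousLinearMap.zero_apply] using this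
  have hd2e3 : d₂ (d₁ (d₂ Ω)) = 0 := by
    have := DFunLike.congr_fun hanti (d₂ Ω)
    simp only [ContinuousLinearMap.mul_apply, ContinuousLinearMap.add_apply,
      ContinuousLinearMap.zero_apply] at this
    simpa [hd2e2] using this
  have hc1e3 : c₁ (d₁ (d₂ Ω)) = d₂ Ω := by
    have := DFunLike.congr_fun car11 (d₂ Ω)
    simpa [ContinuousLinearMap.mul_apply, ContinuousLinearMap.add_apply,
      ContinuousLinearMap.one_apply, hc1e2] using this
  have hc2e3 : c₂ (d₁ (d₂ Ω)) = -(d₁ Ω) := by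
    have := DFunLike.congr_fun car12 (d₂ Ω)
    simp only [ContinuousLinearMap.mul_apply, ContinuousLinearMap.add_apply,
      ContinuousLinearMap.zero_apply, hc2e2] at this
    exact eq_neg_of_add_eq_zero_right this
  -- Gram matrix entries
  have g00 : (inner ℂ Ω Ω : ℂ) = 1 := by
    rw [inner_self_eq_norm_sq_to_K, hΩnorm]; norm_num
  have g01 : (inner ℂ Ω (d₁ Ω) : ℂ) = 0 := by rw [ad1r, hΩ1, inner_zero_left]
  have g02 : (inner ℂ Ω (d₂ Ω) : ℂ) = 0 := by rw [ad2r, hΩ2, inner_zero_left]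
  have g03 : (inner ℂ Ω (d₁ (d₂ Ω)) : ℂ) = 0 := by rw [ad1r, hΩ1, inner_zero_left]
  have g20 : (inner ℂ (d₂ Ω) Ω : ℂ) = 0 := by rw [ad2l, hΩ2, inner_zero_right]
  have g22 : (inner ℂ (d₂ Ω) (d₂ Ω) : ℂ) = 1 := by rw [ad2l, hc2e2, g00]
  have g30 : (inner ℂ (d₁ (d₂ Ω)) Ω : ℂ) = 0 := by rw [ad1l, hΩ1, inner_zero_right]
  have g31 : (inner ℂ (d₁ (d₂ Ω)) (d₁ Ω) : ℂ) = 0 := by rw [ad1l, hc1e1, g20]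
  have g32 : (inner ℂ (d₁ (d₂ Ω)) (d₂ Ω) : ℂ) = 0 := by rw [ad1l, hc1e2, inner_zero_right]
  have g33 : (inner ℂ (d₁ (d₂ Ω)) (d₁ (d₂ Ω)) : ℂ) = 1 := by rw [ad1l, hc1e3, g22]
  -- square root facts
  have s1 : ((Real.sqrt (1 - h) : ℝ) : ℂ) * ((Real.sqrt (1 - h) : ℝ) : ℂ) = 1 - (h : ℂ) := by
    rw [← Complex.ofReal_mul, Real.mul_self_sqrt (by linarith)]
    push_cast; ring
  have s2 : ((Real.sqrt h : ℝ) : ℂ) * ((Real.sqrt h : ℝ) : ℂ) = (h : ℂ) := by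
    rw [← Complex.ofReal_mul, Real.mul_self_sqrt h0]
  intro BV Ω' ωBV ωmix
  have expand : ∀ T : EuclideanSpace ℂ (Fin 4) →L[ℂ] EuclideanSpace ℂ (Fin 4),
      ωBV T = (1 - (h : ℂ)) * inner ℂ Ω (T Ω)
        + ((Real.sqrt (1 - h) : ℝ) : ℂ) * ((Real.sqrt h : ℝ) : ℂ)
            * (inner ℂ Ω (T (d₁ (d₂ Ω))) + inner ℂ (d₁ (d₂ Ω)) (T Ω))
        + (h : ℂ) * inner ℂ (d₁ (d₂ Ω)) (T (d₁ (d₂ Ω))) := by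
    intro T
    show (inner ℂ ((Real.sqrt (1 - h) : ℂ) • Ω + (Real.sqrt h : ℂ) • d₁ (d₂ Ω))
        (T ((Real.sqrt (1 - h) : ℂ) • Ω + (Real.sqrt h : ℂ) • d₁ (d₂ Ω))) : ℂ) = _
    simp only [map_add, map_smul, inner_add_left, inner_add_right, inner_smul_left,
      inner_smul_right, Complex.conj_ofReal]
    linear_combination (inner ℂ Ω (T Ω) : ℂ) * s1 + (inner ℂ (d₁ (d₂ Ω)) (T (d₁ (d₂ Ω))) : ℂ) * s2
  have hmix : ∀ T : EuclideanSpace ℂ (Fin 4) →L[ℂ] EuclideanSpace ℂ (Fin 4),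
      ωmix T = (1 - (h : ℂ)) * inner ℂ Ω (T Ω) + (h : ℂ) * inner ℂ (d₁ (d₂ Ω)) (T (d₁ (d₂ Ω))) := by
    intro T; rfl
  refine ⟨?_, ?_, ?_, ?_⟩
  · intro T hT
    fin_cases hT <;>
      (rw [expand, hmix] <;>
        simp only [ContinuousLinearMap.mul_apply, ContinuousLinearMap.add_apply,
          ContinuousLinearMap.sub_apply, ContinuousLinearMap.smul_apply,
          ContinuousLinearMap.one_apply, map_add, map_smul, map_neg, map_sub, map_zero, smul_add, smul_neg, smul_zero,
          hΩ1, hΩ2, hc1e1, hc2e1, hc1e2, hc2e2, hc1e3, hc2e3, hd1e1, hd2e2, hd2e1, hd1e3, hd2e3,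
          inner_add_left, inner_add_right, inner_smul_left, inner_smul_right, inner_neg_left,
          inner_neg_right, inner_sub_left, inner_sub_right,
          inner_zero_left, inner_zero_right,
          g00, g01, g02, g03, g20, g22, g30, g31, g32, g33]) <;> ring
  · rw [expand]
    simp [ContinuousLinearMap.mul_apply, hΩ2, hc2e3, map_neg, hc1e1,
      inner_neg_right, g00, g30, g33, g03, hΩnorm]
    rw [Real.sqrt_mul h0, Complex.ofReal_mul]
    ring
  · intro hlt hgt
    have key : ωBV (c₁ * c₂) = -(Real.sqrt (h * (1 - h)) : ℂ) := by
      rw [expand]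
      simp [ContinuousLinearMap.mul_apply, hΩ2, hc2e3, map_neg, hc1e1,
        inner_neg_right, g00, g30, g33, g03, hΩnorm]
      rw [Real.sqrt_mul h0, Complex.ofReal_mul]
      ring
    rw [key]
    have : (0:ℝ) < h * (1 - h) := by nlinarith
    simp [Real.sqrt_eq_zero', not_le, this]
  · rw [hmix]
    simp [ContinuousLinearMap.mul_apply, hΩ2, hc2e3, map_neg, hc1e1, inner_neg_right, g00, g30]
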